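/- Let W be a finite-dimensional real vector space and A_W an algebraic curvature tensor on W. On V := W ⊕ W* define the nondegenerate symmetric bilinear form ⟨(w₁,ξ₁),(w₂,ξ₂)⟩ := ξ₁(w₂) + ξ₂(w₁) and the algebraic curvature tensor A((w₁,ξ₁),(w₂,ξ₂),(w₃,ξ₃),(w₄,ξ₄)) := A_W(w₁,w₂,w₃,w₄). Then 𝔐 = (V,⟨·,·⟩,A) is 2-step skew-curvature nilpotent: 𝒜(x₁,x₂)∘𝒜(x₃,x₄) = 0 for all x₁, x₂, x₃, x₄ ∈ V. -/
import Mathlib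


noncomputable section

/-- The Jacobi operator `J(x) : y ↦ 𝒜(y,x)x` of a (tri)linear curvature operator `𝒜`. -/
def jacobiOp {V : Type*} [AddCommGroup V] [Module ℝ V]
    (Aop : V →ₗ[ℝ] V →ₗ[ℝ] V →ₗ[ℝ] V) (x : V) : V →ₗ[ℝ] V where
  toFun y := Aop y x x
  map_add' y z := by simp
  map_smul' c y := by simp

/-- The polarized Jacobi operator `J(x,y) : z ↦ ½(𝒜(z,x)y + 𝒜(z,y)x)`. -/
def jacobiPol {V : Type*} [AddCommGroup V] [Module ℝ V]
    (Aop : V →ₗ[ℝ] V →ₗ[ℝ] V →ₗ[ℝ] V) (x y : V) : V →ₗ[ℝ] V where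
  toFun z := (1/2 : ℝ) • (Aop z x y + Aop z y x)
  map_add' a b := by simp [smul_add]; abel
  map_smul' c a := by simp [smul_add, smul_comm c]

/-- Let `A_W` be an algebraic curvature tensor on `W`. On `V := W ⊕ W*`
with `⟨(w₁,ξ₁),(w₂,ξ₂)⟩ = ξ₁(w₂) + ξ₂(w₁)` and
`A((w₁,ξ₁),...,(w₄,ξ₄)) = A_W(w₁,w₂,w₃,w₄)`, the triple `𝔐 = (V,⟨·,·⟩,A)` is 2-step
skew-curvature nilpotent: `𝒜(x₁,x₂) ∘ 𝒜(x₃,x₄) = 0` for all `xᵢ ∈ V`. -/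
theorem dual_extension_two_step_skew_nilpotent
    {W : Type*} [AddCommGroup W] [Module ℝ W] [FiniteDimensional ℝ W]
    -- an algebraic curvature tensor A_W on W
    (AW : W →ₗ[ℝ] W →ₗ[ℝ] W →ₗ[ℝ] W →ₗ[ℝ] ℝ)
    (hAW1 : ∀ x y z w : W, AW x y z w = - AW y x z w)
    (hAW2 : ∀ x y z w : W, AW x y z w = AW z w x y)
    (hAW3 : ∀ x y z w : W, AW x y z w + AW y z x w + AW z x y w = 0)
    -- the curvature operator 𝒜 of A on V = W ⊕ W*, characterized by
    -- ⟨𝒜(p,q)r, s⟩ = A_W(p₁,q₁,r₁,s₁), where ⟨(w₁,ξ₁),(w₂,ξ₂)⟩ = ξ₁(w₂) + ξ₂(w₁)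
    (Aop : (W × Module.Dual ℝ W) →ₗ[ℝ] (W × Module.Dual ℝ W) →ₗ[ℝ]
      (W × Module.Dual ℝ W) →ₗ[ℝ] (W × Module.Dual ℝ W))
    (hchar : ∀ p q r s : W × Module.Dual ℝ W,
      (Aop p q r).2 s.1 + s.2 (Aop p q r).1 = AW p.1 q.1 r.1 s.1) :
    ∀ x₁ x₂ x₃ x₄ : W × Module.Dual ℝ W, Aop x₁ x₂ ∘ₗ Aop x₃ x₄ = 0 := by
  -- first component of Aop p q r is always 0
  have hfst : ∀ p q r : W × Module.Dual ℝ W, (Aop p q r).1 = 0 := by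
    intro p q r
    rw [← Module.forall_dual_apply_eq_zero_iff ℝ]
    intro φ
    have := hchar p q r (0, φ)
    simpa using this
  -- if r.1 = 0 then Aop p q r = 0
  have hzero : ∀ p q r : W × Module.Dual ℝ W, r.1 = 0 → Aop p q r = 0 := by
    intro p q r hr
    have hsnd : ∀ w : W, (Aop p q r).2 w = 0 := by
      intro w
      have := hchar p q r (w, 0)
      simp [hr] at this
      simpa using this
    have : (Aop p q r).2 = 0 := LinearMap.ext hsnd
    exact Prod.ext (hfst p q r) this
  intro x₁ x₂ x₃ x₄
  apply LinearMap.ext; intro r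
  simpa using hzero x₁ x₂ (Aop x₃ x₄ r) (hfst x₃ x₄ r)
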